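/- The profunctor action on copresheaves is functorial with respect to profunctor composition: for small categories N, M, K, profunctors p : Nᵒᵖ × M ⥤ Type and q : Mᵒᵖ × K ⥤ Type, and a copresheaf a : N ⥤ Type, there is an isomorphism, natural in k : K, between ((a ⊗ p) ⊗ q) k and (a ⊗ (p ⋄ q)) k, where ⊗ is the coend action of a profunctor on a copresheaf and ⋄ is profunctor composition. -/

import Mathlib

open CategoryTheory Opposite

universe u

section

variable {A B : Type u} [SmallCategory A] [SmallCategory B]

private lemma map_prod_swap (p : (A × B) ⥤ Type u) {a a' : A} {b b' : B}
    (f : a ⟶ a') (g : b ⟶ b') (z : p.obj (a, b)) :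
    p.map ((𝟙 a', g) : (a', b) ⟶ (a', b')) (p.map ((f, 𝟙 b) : (a, b) ⟶ (a', b)) z) =
      p.map ((f, 𝟙 b') : (a, b') ⟶ (a', b')) (p.map ((𝟙 a, g) : (a, b) ⟶ (a, b')) z) := by
  rw [← FunctorToTypes.map_comp_apply, ← FunctorToTypes.map_comp_apply]
  simp [prod_comp]

end

variable {N M K : Type u} [SmallCategory N] [SmallCategory M] [SmallCategory K]

/-- Raw elements of the coend `∫^n a n × p⟨n, m⟩`. -/
def ActRaw (a : N ⥤ Type u) (p : (Nᵒᵖ × M) ⥤ Type u) (m : M) : Type u :=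
  Σ n : N, a.obj n × p.obj (op n, m)

/-- The generating relation of the coend `∫^n a n × p⟨n, m⟩`: for `h : n ⟶ n'`,
identify `⟨n', a.map h x, y⟩` with `⟨n, x, p.map ⟨h.op, 𝟙 m⟩ y⟩`. -/
inductive ActRel (a : N ⥤ Type u) (p : (Nᵒᵖ × M) ⥤ Type u) (m : M) :
    ActRaw a p m → ActRaw a p m → Prop
  | mk {n n' : N} (h : n ⟶ n') (x : a.obj n) (y : p.obj (op n', m)) :
      ActRel a p m ⟨n', a.map h x, y⟩ ⟨n, x, p.map ((h.op, 𝟙 m) : (op n', m) ⟶ (op n, m)) y⟩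

/-- The coend action `a ⊗ p : M ⥤ Type` of a profunctor `p : Nᵒᵖ × M ⥤ Type` on a
copresheaf `a : N ⥤ Type`, with `(a ⊗ p) m = ∫^n a n × p⟨n, m⟩`. -/
def Act (a : N ⥤ Type u) (p : (Nᵒᵖ × M) ⥤ Type u) : M ⥤ Type u where
  obj m := Quot (ActRel a p m)
  map {m m'} g := TypeCat.ofHom <| Quot.lift
    (fun z => Quot.mk _ ⟨z.1, z.2.1, p.map ((𝟙 (op z.1), g) : (op z.1, m) ⟶ (op z.1, m')) z.2.2⟩)
    (by
      rintro _ _ ⟨h, x, y⟩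
      dsimp only
      rw [map_prod_swap]
      exact Quot.sound (ActRel.mk h x _))
  map_id m := by
    ext z
    induction z using Quot.ind with
    | _ z =>
      show Quot.mk _ ⟨z.1, z.2.1,
          p.map ((𝟙 (op z.1), 𝟙 m) : (op z.1, m) ⟶ (op z.1, m)) z.2.2⟩ = Quot.mk _ z
      rw [show ((𝟙 (op z.1), 𝟙 m) : (op z.1, m) ⟶ (op z.1, m)) = 𝟙 (op z.1, m) from rfl,
        FunctorToTypes.map_id_apply]
      rfl
  map_comp {m m' m''} g g' := by
    ext z
    induction z using Quot.ind with
    | _ z =>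
      show Quot.mk (ActRel a p m'') ⟨z.1, z.2.1,
            p.map ((𝟙 (op z.1), g ≫ g') : (op z.1, m) ⟶ (op z.1, m'')) z.2.2⟩ =
          Quot.mk (ActRel a p m'') ⟨z.1, z.2.1,
            p.map ((𝟙 (op z.1), g') : (op z.1, m') ⟶ (op z.1, m''))
              (p.map ((𝟙 (op z.1), g) : (op z.1, m) ⟶ (op z.1, m')) z.2.2)⟩
      have hc : (((𝟙 (op z.1), g) : (op z.1, m) ⟶ (op z.1, m')) ≫
            ((𝟙 (op z.1), g') : (op z.1, m') ⟶ (op z.1, m'')) :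
            (op z.1, m) ⟶ (op z.1, m'')) =
          ((𝟙 (op z.1), g ≫ g') : (op z.1, m) ⟶ (op z.1, m'')) := by
        simp [prod_comp]
      rw [← hc, FunctorToTypes.map_comp_apply]

/-- Raw elements of the coend `∫^m p⟨n, m⟩ × q⟨m, k⟩`. -/
def ProfCompRaw (p : (Nᵒᵖ × M) ⥤ Type u) (q : (Mᵒᵖ × K) ⥤ Type u) (nk : Nᵒᵖ × K) : Type u :=
  Σ m : M, p.obj (nk.1, m) × q.obj (op m, nk.2)

/-- The generating relation of the coend `∫^m p⟨n, m⟩ × q⟨m, k⟩`. -/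
inductive ProfCompRel (p : (Nᵒᵖ × M) ⥤ Type u) (q : (Mᵒᵖ × K) ⥤ Type u) (nk : Nᵒᵖ × K) :
    ProfCompRaw p q nk → ProfCompRaw p q nk → Prop
  | mk {m m' : M} (h : m ⟶ m') (x : p.obj (nk.1, m)) (y : q.obj (op m', nk.2)) :
      ProfCompRel p q nk ⟨m', p.map ((𝟙 nk.1, h) : (nk.1, m) ⟶ (nk.1, m')) x, y⟩
        ⟨m, x, q.map ((h.op, 𝟙 nk.2) : (op m', nk.2) ⟶ (op m, nk.2)) y⟩

/-- Profunctor composition `p ⋄ q : Nᵒᵖ × K ⥤ Type`, with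
`(p ⋄ q)⟨n, k⟩ = ∫^m p⟨n, m⟩ × q⟨m, k⟩`. -/
def ProfComp (p : (Nᵒᵖ × M) ⥤ Type u) (q : (Mᵒᵖ × K) ⥤ Type u) : (Nᵒᵖ × K) ⥤ Type u where
  obj nk := Quot (ProfCompRel p q nk)
  map {nk nk'} f := TypeCat.ofHom <| Quot.lift
    (fun z => Quot.mk _ ⟨z.1, p.map ((f.1, 𝟙 z.1) : (nk.1, z.1) ⟶ (nk'.1, z.1)) z.2.1,
      q.map ((𝟙 (op z.1), f.2) : (op z.1, nk.2) ⟶ (op z.1, nk'.2)) z.2.2⟩)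
    (by
      rintro _ _ ⟨h, x, y⟩
      dsimp only
      rw [← map_prod_swap p, map_prod_swap q]
      exact Quot.sound (ProfCompRel.mk h _ _))
  map_id nk := by
    obtain ⟨n0, k0⟩ := nk
    ext z
    induction z using Quot.ind with
    | _ z =>
      show Quot.mk (ProfCompRel p q (n0, k0)) ⟨z.1,
          p.map ((𝟙 n0, 𝟙 z.1) : (n0, z.1) ⟶ (n0, z.1)) z.2.1,
          q.map ((𝟙 (op z.1), 𝟙 k0) : (op z.1, k0) ⟶ (op z.1, k0)) z.2.2⟩ =
        Quot.mk (ProfCompRel p q (n0, k0)) z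
      rw [show ((𝟙 n0, 𝟙 z.1) : (n0, z.1) ⟶ (n0, z.1)) = 𝟙 (n0, z.1) from rfl,
        show ((𝟙 (op z.1), 𝟙 k0) : (op z.1, k0) ⟶ (op z.1, k0)) = 𝟙 (op z.1, k0)
          from rfl,
        FunctorToTypes.map_id_apply, FunctorToTypes.map_id_apply]
      rfl
  map_comp {nk nk' nk''} f f' := by
    obtain ⟨n0, k0⟩ := nk
    obtain ⟨n1, k1⟩ := nk'
    obtain ⟨n2, k2⟩ := nk''
    obtain ⟨f1, f2⟩ := f
    obtain ⟨f1', f2'⟩ := f'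
    ext z
    induction z using Quot.ind with
    | _ z =>
      show Quot.mk (ProfCompRel p q (n2, k2)) ⟨z.1,
            p.map ((f1 ≫ f1', 𝟙 z.1) : (n0, z.1) ⟶ (n2, z.1)) z.2.1,
            q.map ((𝟙 (op z.1), f2 ≫ f2') : (op z.1, k0) ⟶ (op z.1, k2)) z.2.2⟩ =
          Quot.mk (ProfCompRel p q (n2, k2)) ⟨z.1,
            p.map ((f1', 𝟙 z.1) : (n1, z.1) ⟶ (n2, z.1))
              (p.map ((f1, 𝟙 z.1) : (n0, z.1) ⟶ (n1, z.1)) z.2.1),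
            q.map ((𝟙 (op z.1), f2') : (op z.1, k1) ⟶ (op z.1, k2))
              (q.map ((𝟙 (op z.1), f2) : (op z.1, k0) ⟶ (op z.1, k1)) z.2.2)⟩
      have hp : (((f1, 𝟙 z.1) : (n0, z.1) ⟶ (n1, z.1)) ≫
            ((f1', 𝟙 z.1) : (n1, z.1) ⟶ (n2, z.1)) : (n0, z.1) ⟶ (n2, z.1)) =
          ((f1 ≫ f1', 𝟙 z.1) : (n0, z.1) ⟶ (n2, z.1)) := by
        simp [prod_comp]
      have hq : (((𝟙 (op z.1), f2) : (op z.1, k0) ⟶ (op z.1, k1)) ≫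
            ((𝟙 (op z.1), f2') : (op z.1, k1) ⟶ (op z.1, k2)) :
            (op z.1, k0) ⟶ (op z.1, k2)) =
          ((𝟙 (op z.1), f2 ≫ f2') : (op z.1, k0) ⟶ (op z.1, k2)) := by
        simp [prod_comp]
      rw [← hp, ← hq, FunctorToTypes.map_comp_apply, FunctorToTypes.map_comp_apply]

section Aux

variable (a : N ⥤ Type u) (p : (Nᵒᵖ × M) ⥤ Type u) (q : (Mᵒᵖ × K) ⥤ Type u)

/-- Forward map of the associativity isomorphism. -/
def fwd (k : K) : (Act (Act a p) q).obj k → (Act a (ProfComp p q)).obj k :=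
  Quot.lift
    (fun s : Σ m : M, (Act a p).obj m × q.obj (op m, k) =>
      Quot.lift
        (fun w : Σ n : N, a.obj n × p.obj (op n, s.1) =>
          Quot.mk (ActRel a (ProfComp p q) k)
            ⟨w.1, w.2.1, Quot.mk _ ⟨s.1, w.2.2, s.2.2⟩⟩)
        (by
          rintro _ _ ⟨h, x, y⟩
          rename_i n n'
          dsimp only
          have e : (ProfComp p q).map ((h.op, 𝟙 k) : (op n', k) ⟶ (op n, k))
              (Quot.mk (ProfCompRel p q (op n', k)) ⟨s.1, y, s.2.2⟩) =
              Quot.mk (ProfCompRel p q (op n, k))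
                ⟨s.1, p.map ((h.op, 𝟙 s.1) : (op n', s.1) ⟶ (op n, s.1)) y, s.2.2⟩ := by
            show Quot.mk (ProfCompRel p q (op n, k))
                ⟨s.1, p.map ((h.op, 𝟙 s.1) : (op n', s.1) ⟶ (op n, s.1)) y,
                  q.map ((𝟙 (op s.1), 𝟙 k) : (op s.1, k) ⟶ (op s.1, k)) s.2.2⟩ = _
            rw [show ((𝟙 (op s.1), 𝟙 k) : (op s.1, k) ⟶ (op s.1, k)) = 𝟙 (op s.1, k)
              from rfl, FunctorToTypes.map_id_apply]
          exact (Quot.sound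
              (ActRel.mk h x (Quot.mk (ProfCompRel p q (op n', k)) ⟨s.1, y, s.2.2⟩))).trans
            (congrArg (fun W => Quot.mk (ActRel a (ProfComp p q) k) ⟨n, x, W⟩) e))
        s.2.1)
    (by
      rintro _ _ ⟨h, w, z⟩
      rename_i m m'
      induction w using Quot.ind with
      | _ t =>
        obtain ⟨n, x, y⟩ := t
        have e : Quot.mk (ProfCompRel p q (op n, k))
              ⟨m', p.map ((𝟙 (op n), h) : (op n, m) ⟶ (op n, m')) y, z⟩ =
            Quot.mk (ProfCompRel p q (op n, k))
              ⟨m, y, q.map ((h.op, 𝟙 k) : (op m', k) ⟶ (op m, k)) z⟩ :=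
          Quot.sound (ProfCompRel.mk (nk := (op n, k)) h y z)
        exact congrArg (fun W => Quot.mk (ActRel a (ProfComp p q) k) ⟨n, x, W⟩) e)

/-- Backward map of the associativity isomorphism. -/
def bwd (k : K) : (Act a (ProfComp p q)).obj k → (Act (Act a p) q).obj k :=
  Quot.lift
    (fun s : Σ n : N, a.obj n × (ProfComp p q).obj (op n, k) =>
      Quot.lift
        (fun t : Σ m : M, p.obj (op s.1, m) × q.obj (op m, k) =>
          Quot.mk (ActRel (Act a p) q k)
            ⟨t.1, Quot.mk _ ⟨s.1, s.2.1, t.2.1⟩, t.2.2⟩)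
        (by
          rintro _ _ ⟨h, y, z⟩
          rename_i m m'
          dsimp only
          exact Quot.sound
            (ActRel.mk (a := Act a p) h (Quot.mk (ActRel a p m) ⟨s.1, s.2.1, y⟩) z))
        s.2.2)
    (by
      rintro _ _ ⟨h, x, w⟩
      rename_i n n'
      induction w using Quot.ind with
      | _ t =>
        obtain ⟨m, y, z⟩ := t
        show Quot.mk (ActRel (Act a p) q k) ⟨m, Quot.mk _ ⟨n', a.map h x, y⟩, z⟩ =
          Quot.mk (ActRel (Act a p) q k)
            ⟨m, Quot.mk _ ⟨n, x, p.map ((h.op, 𝟙 m) : (op n', m) ⟶ (op n, m)) y⟩,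
              q.map ((𝟙 (op m), 𝟙 k) : (op m, k) ⟶ (op m, k)) z⟩
        rw [show ((𝟙 (op m), 𝟙 k) : (op m, k) ⟶ (op m, k)) = 𝟙 (op m, k) from rfl,
          FunctorToTypes.map_id_apply]
        exact congrArg (fun W => Quot.mk (ActRel (Act a p) q k) ⟨m, W, z⟩)
          (Quot.sound (ActRel.mk h x y)))

end Aux

/-- The profunctor action on copresheaves is functorial with respect to profunctor
composition: `(a ⊗ p) ⊗ q ≅ a ⊗ (p ⋄ q)` naturally in `k : K`. -/
theorem act_profComp_iso (a : N ⥤ Type u) (p : (Nᵒᵖ × M) ⥤ Type u)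
    (q : (Mᵒᵖ × K) ⥤ Type u) :
    Nonempty (Act (Act a p) q ≅ Act a (ProfComp p q)) := by
  refine ⟨NatIso.ofComponents (fun k => ⟨TypeCat.ofHom (fwd a p q k), TypeCat.ofHom (bwd a p q k), ?_, ?_⟩) ?_⟩
  · ext s
    induction s using Quot.ind with
    | _ s =>
      obtain ⟨m, w, z⟩ := s
      induction w using Quot.ind with
      | _ w => rfl
  · ext s
    induction s using Quot.ind with
    | _ s =>
      obtain ⟨n, x, w⟩ := s
      induction w using Quot.ind with
      | _ w => rfl
  · intro k k' g
    ext s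
    induction s using Quot.ind with
    | _ s =>
      obtain ⟨m, w, z⟩ := s
      induction w using Quot.ind with
      | _ w =>
        obtain ⟨n, x, y⟩ := w
        show Quot.mk (ActRel a (ProfComp p q) k')
            ⟨n, x, Quot.mk _ ⟨m, y, q.map ((𝟙 (op m), g) : (op m, k) ⟶ (op m, k')) z⟩⟩ =
          Quot.mk (ActRel a (ProfComp p q) k')
            ⟨n, x, Quot.mk _ ⟨m, p.map ((𝟙 (op n), 𝟙 m) : (op n, m) ⟶ (op n, m)) y,
              q.map ((𝟙 (op m), g) : (op m, k) ⟶ (op m, k')) z⟩⟩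
        rw [show ((𝟙 (op n), 𝟙 m) : (op n, m) ⟶ (op n, m)) = 𝟙 (op n, m) from rfl,
          FunctorToTypes.map_id_apply]
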